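/- arXiv:2210.14206 — 3 statements merged into one kernel-verified Lean document; each statement's English description precedes it below -/
import Mathlib

section
/- For n >= 1, the maximal number of runs of a flattened parking function of length n is at most ceil(n/2), and this bound is achieved. -/
namespace FlatPF

/-- Decomposition of a word into maximal weakly increasing runs. -/
def runs : List ℕ → List (List ℕ)
  | [] => []
  | a :: l =>
    match runs l with
    | [] => [[a]]
    | [] :: rs => [a] :: rs
    | (b :: t) :: rs => if a ≤ b then (a :: b :: t) :: rs else [a] :: (b :: t) :: rs

/-- The number of maximal weakly increasing runs of a word. -/
def numRuns (w : List ℕ) : ℕ := (runs w).length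

/-- A word is flattened if the leading values of its runs are weakly increasing. -/
def IsFlattened (w : List ℕ) : Prop :=
  List.Chain' (· ≤ ·) ((runs w).map (fun r => r.headD 0))

/-- A word is a parking function: entries in `[m]` and the weakly increasing
rearrangement `(a'_1, …, a'_m)` satisfies `a'_i ≤ i`. -/
def IsPF (w : List ℕ) : Prop :=
  (∀ x ∈ w, 1 ≤ x ∧ x ≤ w.length) ∧
  ∀ i < w.length, (w.mergeSort (· ≤ ·)).getD i 0 ≤ i + 1

/-- `w` is obtained by inserting the elements of the multiset `S` into some
permutation of `[n]`, keeping the letters of the permutation in relative order. -/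
def IsInsertion (S : Multiset ℕ) (n : ℕ) (w : List ℕ) : Prop :=
  (↑w : Multiset ℕ) = ↑(List.range' 1 n) + S ∧
  ∃ p : List ℕ, p.Perm (List.range' 1 n) ∧ p.Sublist w

/-- Flattened `S`-insertion parking functions of order `n`. -/
def flatIns (S : Multiset ℕ) (n : ℕ) : Set (List ℕ) :=
  {w | IsInsertion S n w ∧ IsFlattened w}

/-- Flattened `S`-insertion parking functions of order `n` with exactly `k` runs. -/
def flatInsK (S : Multiset ℕ) (n k : ℕ) : Set (List ℕ) :=
  {w | IsInsertion S n w ∧ IsFlattened w ∧ numRuns w = k}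

/-- `f(S; n, k)`, the number of flattened `S`-insertion parking functions of order `n`
with exactly `k` runs.  In particular `fS 0 n k` is the number of flattened
permutations of `[n]` with `k` runs. -/
noncomputable def fS (S : Multiset ℕ) (n k : ℕ) : ℕ := (flatInsK S n k).ncard

/-! ### Auxiliary lemmas -/

lemma runs_ne_nil : ∀ w : List ℕ, ∀ r ∈ runs w, r ≠ [] := by
  intro w
  induction w with
  | nil => simp [runs]
  | cons a l ih =>
    rcases h : runs l with _ | ⟨r, rs⟩
    · simp [runs, h]
    · rcases r with _ | ⟨b, t⟩
      · exact absurd rfl (ih [] (h ▸ List.mem_cons_self))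
      · intro r hr
        simp only [runs, h] at hr
        split at hr
        · rcases List.mem_cons.mp hr with heq | hr
          · subst heq; simp
          · exact ih r (h ▸ List.mem_cons_of_mem _ hr)
        · rcases List.mem_cons.mp hr with heq | hr
          · subst heq; simp
          · exact ih r (h ▸ hr)

lemma runs_sum : ∀ w : List ℕ, ((runs w).map List.length).sum = w.length := by
  intro w
  induction w with
  | nil => simp [runs]
  | cons a l ih =>
    rcases h : runs l with _ | ⟨r, rs⟩
    · simp [runs, h]; rw [h] at ih; simpa using ih.symm
    · rcases r with _ | ⟨b, t⟩
      · exact absurd rfl (runs_ne_nil l [] (h ▸ List.mem_cons_self))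
      · rw [h] at ih
        simp only [runs, h]
        split <;> simp_all <;> omega

lemma runs_chain : ∀ w : List ℕ,
    List.Chain' (fun r r' => r'.headD 0 < r.getLastD 0) (runs w) := by
  intro w
  induction w with
  | nil => simp [runs, List.Chain']
  | cons a l ih =>
    rcases h : runs l with _ | ⟨r, rs⟩
    · simp [runs, h, List.Chain']
    · rcases r with _ | ⟨b, t⟩
      · exact absurd rfl (runs_ne_nil l [] (h ▸ List.mem_cons_self))
      · rw [h] at ih
        simp only [runs, h]
        split
        · rcases rs with _ | ⟨r', rs'⟩
          · simp [List.Chain']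
          · simp only [List.Chain', List.isChain_cons_cons] at ih ⊢
            refine ⟨?_, ih.2⟩
            simpa [List.getLastD_cons] using ih.1
        · simp only [List.Chain', List.isChain_cons_cons]
          exact ⟨by simpa [List.getLastD_cons] using (by omega : b < a), ih⟩

lemma count_le : ∀ rs : List (List ℕ), (∀ r ∈ rs, r ≠ []) →
    List.Chain' (· ≤ ·) (rs.map (fun r => r.headD 0)) →
    List.Chain' (fun r r' => r'.headD 0 < r.getLastD 0) rs →
    2 * rs.length ≤ (rs.map List.length).sum + 1 := by
  intro rs
  induction rs with
  | nil => simp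
  | cons r rs ih =>
    intro hne hh hc
    rcases rs with _ | ⟨r', rs'⟩
    · have : r ≠ [] := hne r (by simp)
      have : 1 ≤ r.length := by
        rcases r with _ | _
        · simp at this
        · simp
      simp; omega
    · simp only [List.Chain', List.isChain_cons_cons] at hc
      simp only [List.map_cons, List.Chain', List.isChain_cons_cons] at hh
      have h2 : 2 ≤ r.length := by
        rcases r with _ | ⟨x, t⟩
        · exact absurd rfl (hne [] (by simp))
        · rcases t with _ | _
          · exfalso
            have h1 := hh.1
            have hcc := hc.1
            simp [List.getLastD_cons, List.headD_eq_head?] at h1 hcc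
            omega
          · simp
      have := ih (fun r hr => hne r (List.mem_cons_of_mem _ hr)) hh.2 hc.2
      simp only [List.map_cons, List.sum_cons, List.length_cons] at this ⊢
      omega

/-! ### The extremal example -/

def wAux : ℕ → ℕ → List ℕ
  | _, 0 => []
  | c, m+1 => 1 :: c :: wAux (c+1) m

lemma runs_wAux : ∀ (m c : ℕ) (t : List ℕ), 2 ≤ c → (t = [] ∨ t = [1]) →
    runs (wAux c m ++ t) = (List.range' c m).map (fun x => [1, x]) ++ runs t := by
  intro m
  induction m with
  | zero => intro c t _ _; simp [wAux]
  | succ m ih =>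
    intro c t hc ht
    have hIH := ih (c+1) t (by omega) ht
    have hshape : runs (wAux (c+1) m ++ t) = [] ∨
        ∃ s rs, runs (wAux (c+1) m ++ t) = (1 :: s) :: rs := by
      rcases m with _ | m
      · rcases ht with rfl | rfl
        · left; simp [wAux] at hIH ⊢; simpa [runs] using hIH
        · right; exact ⟨[], [], by simpa [wAux, runs] using hIH⟩
      · right
        rw [hIH, List.range'_succ, List.map_cons]
        exact ⟨_, _, rfl⟩
    have hstep : runs (c :: (wAux (c+1) m ++ t)) = [c] :: runs (wAux (c+1) m ++ t) := by
      rcases hshape with he | ⟨s, rs, he⟩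
      · simp [runs, he]
      · simp [runs, he, if_neg (by omega : ¬ c ≤ 1)]
    have hw : wAux c (m+1) ++ t = 1 :: c :: (wAux (c+1) m ++ t) := by simp [wAux]
    rw [hw]
    have h1 : runs (1 :: (c :: (wAux (c+1) m ++ t))) =
        [1, c] :: runs (wAux (c+1) m ++ t) := by
      show (match runs (c :: (wAux (c+1) m ++ t)) with
        | [] => [[1]]
        | [] :: rs => [1] :: rs
        | (b :: t') :: rs => if 1 ≤ b then (1 :: b :: t') :: rs
            else [1] :: (b :: t') :: rs) = _
      rw [hstep]
      simp [if_pos (by omega : 1 ≤ c)]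
    rw [h1, hIH, List.range'_succ]
    simp

lemma wAux_length : ∀ m c, (wAux c m).length = 2 * m := by
  intro m
  induction m with
  | zero => intro c; simp [wAux]
  | succ m ih => intro c; simp [wAux, ih]; omega

lemma wAux_perm : ∀ m c, (wAux c m).Perm (List.replicate m 1 ++ List.range' c m) := by
  intro m
  induction m with
  | zero => intro c; simp [wAux]
  | succ m ih =>
    intro c
    rw [List.range'_succ]
    have : List.replicate (m+1) 1 ++ (c :: List.range' (c+1) m) =
        1 :: (List.replicate m 1 ++ (c :: List.range' (c+1) m)) := by
      simp [List.replicate_succ]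
    rw [this]
    show (1 :: c :: wAux (c+1) m : List ℕ).Perm _
    exact List.Perm.cons 1 (((ih (c+1)).cons c).trans List.perm_middle.symm)

lemma sorted_target (k m : ℕ) :
    List.Pairwise (· ≤ ·) (List.replicate k (1:ℕ) ++ List.range' 2 m) := by
  rw [List.pairwise_append]
  refine ⟨?_, ?_, ?_⟩
  · rw [List.pairwise_replicate]; right; rfl
  · exact (List.pairwise_lt_range' (s := 2) (n := m)).imp le_of_lt
  · intro a ha b hb
    have h1 : a = 1 := List.eq_of_mem_replicate ha
    have h2 := (List.mem_range'_1.mp hb).1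
    omega

lemma chain'_rep : ∀ k, List.Chain' (· ≤ ·) (List.replicate k (1:ℕ)) := by
  intro k
  induction k with
  | zero => simp [List.Chain']
  | succ k ih =>
    rw [List.replicate_succ]
    rcases k with _ | k
    · simp [List.Chain']
    · rw [List.replicate_succ]; simp only [List.Chain', List.isChain_cons_cons]
      exact ⟨le_refl 1, by rw [← List.replicate_succ]; exact ih⟩

lemma main_word (m : ℕ) (t : List ℕ) (ht : t = [] ∨ t = [1])
    (h1 : 1 ≤ m + t.length) :
    IsPF (wAux 2 m ++ t) ∧ (wAux 2 m ++ t).length = 2 * m + t.length ∧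
    IsFlattened (wAux 2 m ++ t) ∧ numRuns (wAux 2 m ++ t) = m + t.length := by
  have htl : t.length ≤ 1 := by rcases ht with rfl | rfl <;> simp
  have ht1 : t = List.replicate t.length 1 := by rcases ht with rfl | rfl <;> rfl
  have hrt : runs t = t.map (fun x => [x]) := by rcases ht with rfl | rfl <;> rfl
  have hlen : (wAux 2 m ++ t).length = 2 * m + t.length := by
    simp [wAux_length]
  have hperm : (wAux 2 m ++ t).Perm
      (List.replicate (m + t.length) 1 ++ List.range' 2 m) := by
    have := (wAux_perm m 2).append_right t
    refine this.trans ?_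
    have : (List.replicate m 1 ++ List.range' 2 m) ++ t =
        List.replicate m 1 ++ (List.range' 2 m ++ t) := by simp
    rw [this]
    have hr : List.replicate (m + t.length) 1 ++ List.range' 2 m =
        List.replicate m 1 ++ (List.replicate t.length 1 ++ List.range' 2 m) := by
      rw [← List.append_assoc, ← List.replicate_add]
    rw [hr]
    refine List.Perm.append_left _ ?_
    rw [← ht1] at *
    exact (List.perm_append_comm).trans (by rw [ht1])
  have hms : (wAux 2 m ++ t).mergeSort (· ≤ ·) =
      List.replicate (m + t.length) 1 ++ List.range' 2 m := by
    refine List.Perm.eq_of_pairwise' (r := (· ≤ ·))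
      ?_ (sorted_target _ _) (((wAux 2 m ++ t).mergeSort_perm _).trans hperm)
    have := List.pairwise_mergeSort (le := fun a b : ℕ => a ≤ b)
      (by intro a b c h1 h2; simp at *; omega)
      (by intro a b; simpa using Nat.le_total a b) (wAux 2 m ++ t)
    exact this.imp (by simp)
  have hruns := runs_wAux m 2 t (le_refl 2) ht
  refine ⟨⟨?_, ?_⟩, hlen, ?_, ?_⟩
  · -- membership bounds
    intro x hx
    rw [hlen]
    have hx' := hperm.mem_iff.mp hx
    rw [List.mem_append] at hx'
    rcases hx' with hx' | hx'
    · have := List.eq_of_mem_replicate hx'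
      omega
    · have := List.mem_range'_1.mp hx'
      omega
  · -- parking condition
    intro i hi
    rw [hlen] at hi
    rw [hms]
    by_cases hik : i < m + t.length
    · rw [List.getD_append _ _ _ _ (by simpa using hik)]
      rw [List.getD_eq_getElem?_getD, List.getElem?_replicate, if_pos hik]
      simp
    · rw [List.getD_append_right _ _ _ _ (by simpa using not_lt.mp hik)]
      rw [List.getD_eq_getElem?_getD, List.length_replicate,
        List.getElem?_range' (by omega : i - (m + t.length) < m)]
      simp
      omega
  · -- flattened
    show List.Chain' (· ≤ ·) _
    have hheads : (runs (wAux 2 m ++ t)).map (fun r => r.headD 0) =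
        List.replicate (m + t.length) 1 := by
      rw [hruns, hrt, List.map_append, List.map_map, List.map_map]
      rw [List.replicate_add]
      congr 1
      · rw [show ((fun r => List.headD r 0) ∘ fun x => [1, x]) = fun _ => 1 from rfl]
        simp [List.map_const']
      · rw [show ((fun r => List.headD r 0) ∘ fun x => [x]) = fun x => x from rfl]
        simpa using ht1
    rw [hheads]
    exact chain'_rep _
  · -- number of runs
    show (runs _).length = _
    rw [hruns, hrt]
    simp

end FlatPF

open FlatPF in
/-- For `n ≥ 1`, every flattened parking function of length `n` has at most
`⌈n/2⌉` runs, and this bound is achieved. -/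
theorem stmt2 (n : ℕ) (hn : 1 ≤ n) :
    (∀ w : List ℕ, IsPF w → w.length = n → IsFlattened w → numRuns w ≤ (n + 1) / 2) ∧
    (∃ w : List ℕ, IsPF w ∧ w.length = n ∧ IsFlattened w ∧ numRuns w = (n + 1) / 2) := by
  constructor
  · intro w _ hlen hfl
    have h1 := count_le (runs w) (runs_ne_nil w) hfl (runs_chain w)
    have h2 := runs_sum w
    show (runs w).length ≤ (n + 1) / 2
    omega
  · set t : List ℕ := if n % 2 = 1 then [1] else [] with htd
    have ht : t = [] ∨ t = [1] := by
      rw [htd]; rcases Nat.mod_two_eq_zero_or_one n with h | h <;> simp [h]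
    have htl : t.length = n % 2 := by
      rw [htd]; rcases Nat.mod_two_eq_zero_or_one n with h | h <;> simp [h]
    obtain ⟨hpf, hlen, hfl, hnr⟩ := main_word (n / 2) t ht (by omega)
    exact ⟨wAux 2 (n / 2) ++ t, hpf, by omega, hfl, by omega⟩
end

section
/- Let S be a multiset with elements in [n-2]. Then the set of flattened (S union {n})-insertion parking functions of order n is in bijection with the set of flattened (S union {n-1})-insertion parking functions of order n; moreover, the bijection preserves the number of runs. -/
namespace FlatAux
open FlatPF

/-- successors of descents: heads of all runs except the first. -/
def th : List ℕ → List ℕ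
  | a :: b :: l => (if b < a then [b] else []) ++ th (b :: l)
  | _ => []

@[simp] lemma th_nil : th [] = [] := rfl
@[simp] lemma th_single (a : ℕ) : th [a] = [] := rfl
lemma th_cons_cons (a b : ℕ) (l : List ℕ) :
    th (a :: b :: l) = (if b < a then [b] else []) ++ th (b :: l) := rfl

lemma th_append (X : List ℕ) (y : ℕ) (Z : List ℕ) :
    th (X ++ y :: Z) = th (X ++ [y]) ++ th (y :: Z) := by
  induction X with
  | nil => simp
  | cons x X ih =>
    cases X with
    | nil => simp [th_cons_cons]
    | cons x2 X' =>
      show th (x :: x2 :: (X' ++ y :: Z)) = th (x :: x2 :: (X' ++ [y])) ++ th (y :: Z)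
      rw [th_cons_cons x x2, th_cons_cons x x2 (X' ++ [y])]
      show _ = ((if x2 < x then [x2] else []) ++ th (x2 :: X' ++ [y])) ++ th (y :: Z)
      rw [List.append_assoc]
      show (if x2 < x then [x2] else []) ++ th (x2 :: X' ++ y :: Z) = _
      rw [ih]

lemma runs_spec (l : List ℕ) : ∀ a : ℕ,
    (∃ r rs, runs (a :: l) = (a :: r) :: rs) ∧
    (runs (a :: l)).map (fun r => r.headD 0) = a :: th (a :: l) ∧
    (runs (a :: l)).length = (th (a :: l)).length + 1 := by
  induction l with
  | nil => intro a; refine ⟨⟨[], [], rfl⟩, rfl, rfl⟩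
  | cons b t ih =>
    intro a
    obtain ⟨⟨r, rs, hshape⟩, hmap, hlen⟩ := ih b
    have hruns : runs (a :: b :: t)
        = if a ≤ b then (a :: b :: r) :: rs else [a] :: (b :: r) :: rs := by
      show (match runs (b :: t) with
        | [] => [[a]]
        | [] :: rs => [a] :: rs
        | (b' :: t') :: rs => if a ≤ b' then (a :: b' :: t') :: rs
            else [a] :: (b' :: t') :: rs) = _
      rw [hshape]
    rw [hshape] at hmap hlen
    simp only [List.map_cons, List.headD_cons, List.length_cons] at hmap hlen
    by_cases hab : a ≤ b
    · rw [if_pos hab] at hruns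
      refine ⟨⟨b :: r, rs, by rw [hruns]⟩, ?_, ?_⟩
      · rw [hruns, th_cons_cons, if_neg (by omega)]
        simp only [List.map_cons, List.headD_cons, List.nil_append]
        have := (List.cons_injective.eq_iff.mp hmap)
        rw [this]
      · rw [hruns, th_cons_cons, if_neg (by omega)]
        simpa using hlen
    · rw [if_neg hab] at hruns
      refine ⟨⟨[], (b :: r) :: rs, by rw [hruns]⟩, ?_, ?_⟩
      · rw [hruns, th_cons_cons, if_pos (by omega)]
        simp only [List.map_cons, List.headD_cons, List.singleton_append]
        rw [List.cons_injective.eq_iff.mp hmap]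
      · rw [hruns, th_cons_cons, if_pos (by omega)]
        simp only [List.length_cons, List.singleton_append]
        omega

lemma headD_runs {w : List ℕ} (hw : w ≠ []) :
    (runs w).map (fun r => r.headD 0) = w.headD 0 :: th w := by
  cases w with
  | nil => exact absurd rfl hw
  | cons a l => exact (runs_spec l a).2.1

lemma numRuns_eq {w : List ℕ} (hw : w ≠ []) : numRuns w = (th w).length + 1 := by
  cases w with
  | nil => exact absurd rfl hw
  | cons a l => exact (runs_spec l a).2.2

lemma isFlattened_iff {w : List ℕ} (hw : w ≠ []) :
    IsFlattened w ↔ List.Chain' (· ≤ ·) (w.headD 0 :: th w) := by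
  unfold IsFlattened; rw [headD_runs hw]

lemma flat_run_transfer {w w' : List ℕ} (h1 : w ≠ []) (h2 : w' ≠ [])
    (hh : w.headD 0 = w'.headD 0) (ht : th w = th w') :
    (IsFlattened w ↔ IsFlattened w') ∧ numRuns w = numRuns w' := by
  constructor
  · rw [isFlattened_iff h1, isFlattened_iff h2, hh, ht]
  · rw [numRuns_eq h1, numRuns_eq h2, ht]


lemma exists_mem_le (l : List ℕ) : ∀ (a x : ℕ), x ∈ a :: l →
    ∃ h, h ∈ a :: th (a :: l) ∧ h ≤ x := by
  induction l with
  | nil =>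
    intro a x hx
    rw [List.mem_singleton] at hx
    exact ⟨a, List.mem_cons_self, hx ▸ le_rfl⟩
  | cons b t ih =>
    intro a x hx
    rcases List.mem_cons.mp hx with heq | hx
    · exact ⟨a, List.mem_cons_self, heq.ge⟩
    · obtain ⟨h, hmem, hle⟩ := ih b x hx
      rcases List.mem_cons.mp hmem with rfl | hmem
      · by_cases hab : a ≤ h
        · exact ⟨a, List.mem_cons_self, le_trans hab hle⟩
        · refine ⟨h, ?_, hle⟩
          rw [th_cons_cons, if_pos (by omega)]
          exact List.mem_cons_of_mem _ (List.mem_append_left _ (List.mem_singleton_self _))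
      · refine ⟨h, ?_, hle⟩
        rw [th_cons_cons]
        exact List.mem_cons_of_mem _ (List.mem_append_right _ hmem)

lemma head_le {w : List ℕ} (hf : List.Chain' (· ≤ ·) (w.headD 0 :: th w))
    {x : ℕ} (hx : x ∈ w) : w.headD 0 ≤ x := by
  cases w with
  | nil => simp at hx
  | cons a l =>
    obtain ⟨h, hmem, hle⟩ := exists_mem_le l a x hx
    replace hf := List.isChain_iff_pairwise.mp hf
    rcases List.mem_cons.mp hmem with rfl | hmem
    · exact hle
    · exact le_trans ((List.pairwise_cons.mp hf).1 h hmem) hle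

lemma th_last (A : List ℕ) : ∀ x x' : ℕ, (∀ a ∈ A, a ≤ x ∧ a ≤ x') →
    th (A ++ [x]) = th (A ++ [x']) := by
  induction A with
  | nil => intro x x' _; rfl
  | cons a A ih =>
    intro x x' h
    cases A with
    | nil =>
      have := h a (by simp)
      show th [a, x] = th [a, x']
      rw [th_cons_cons, th_cons_cons, if_neg (by omega), if_neg (by omega)]
      rfl
    | cons a2 A' =>
      show th (a :: a2 :: (A' ++ [x])) = th (a :: a2 :: (A' ++ [x']))
      rw [th_cons_cons, th_cons_cons]
      have := ih x x' (fun b hb => h b (List.mem_cons_of_mem _ hb))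
      show _ ++ th (a2 :: A' ++ [x]) = _ ++ th (a2 :: A' ++ [x'])
      rw [this]

lemma shapeA (A B C : List ℕ) (x x' y : ℕ)
    (hA : ∀ a ∈ A, a ≤ x ∧ a ≤ x')
    (hB0 : B = [] → (y < x ↔ y < x'))
    (hB : ∀ b ∈ B, (b < x ↔ b < x')) :
    th (A ++ x :: B ++ y :: C) = th (A ++ x' :: B ++ y :: C) := by
  have mid : th (x :: (B ++ y :: C)) = th (x' :: (B ++ y :: C)) := by
    cases B with
    | nil =>
      show th (x :: y :: C) = th (x' :: y :: C)
      rw [th_cons_cons, th_cons_cons, if_congr (hB0 rfl) rfl rfl]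
    | cons b B' =>
      show th (x :: b :: (B' ++ y :: C)) = th (x' :: b :: (B' ++ y :: C))
      rw [th_cons_cons, th_cons_cons, if_congr (hB b (by simp)) rfl rfl]
  have goal : th (A ++ x :: (B ++ y :: C)) = th (A ++ x' :: (B ++ y :: C)) := by
    rw [th_append A x (B ++ y :: C), th_append A x' (B ++ y :: C),
      th_last A x x' hA, mid]
  simpa only [List.cons_append, List.append_assoc] using goal

lemma shapeB (A B C : List ℕ) (x y y' : ℕ)
    (hB0 : B = [] → (¬ y < x ∧ ¬ y' < x))
    (hB : ∀ b ∈ B, b ≤ y ∧ b ≤ y')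
    (hC : ∀ c ∈ C, (c < y ↔ c < y')) :
    th (A ++ x :: B ++ y :: C) = th (A ++ x :: B ++ y' :: C) := by
  have g1 : th ((x :: B) ++ [y]) = th ((x :: B) ++ [y']) := by
    cases B with
    | nil =>
      have := hB0 rfl
      show th [x, y] = th [x, y']
      rw [th_cons_cons, th_cons_cons, if_neg this.1, if_neg this.2]
      rfl
    | cons b B' =>
      show th (x :: b :: (B' ++ [y])) = th (x :: b :: (B' ++ [y']))
      rw [th_cons_cons, th_cons_cons]
      have h2 : th (b :: B' ++ [y]) = th (b :: B' ++ [y']) :=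
        th_last (b :: B') y y' (fun e he => hB e he)
      show _ ++ th (b :: B' ++ [y]) = _ ++ th (b :: B' ++ [y'])
      rw [h2]
  have g2 : th (y :: C) = th (y' :: C) := by
    cases C with
    | nil => rfl
    | cons c C' =>
      rw [th_cons_cons, th_cons_cons, if_congr (hC c (by simp)) rfl rfl]
  have key : th (x :: (B ++ y :: C)) = th (x :: (B ++ y' :: C)) := by
    have f1 := th_append (x :: B) y C
    have f2 := th_append (x :: B) y' C
    simp only [List.cons_append] at f1 f2
    simp only [List.cons_append] at g1
    rw [f1, f2, g1, g2]
  have goal : th (A ++ x :: (B ++ y :: C)) = th (A ++ x :: (B ++ y' :: C)) := by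
    rw [th_append A x (B ++ y :: C), th_append A x (B ++ y' :: C), key]
  simpa only [List.cons_append, List.append_assoc] using goal


lemma mem_first_decomp {x : ℕ} : ∀ {w : List ℕ}, x ∈ w →
    ∃ A R, w = A ++ x :: R ∧ x ∉ A := by
  intro w hw
  induction w with
  | nil => simp at hw
  | cons a l ih =>
    by_cases hax : a = x
    · exact ⟨[], l, by rw [hax]; rfl, by simp⟩
    · have hx : x ∈ l := by
        rcases List.mem_cons.mp hw with h | h
        · exact absurd h.symm hax
        · exact h
      obtain ⟨A, R, hAR, hA⟩ := ih hx
      exact ⟨a :: A, R, by rw [hAR]; rfl, by simp [hA, Ne.symm hax]⟩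

lemma count_one_decomp {x : ℕ} {w : List ℕ} (h : w.count x = 1) :
    ∃ A B, w = A ++ x :: B ∧ x ∉ A ∧ x ∉ B := by
  have hx : x ∈ w := List.count_pos_iff.mp (by omega)
  obtain ⟨A, B, hAB, hA⟩ := mem_first_decomp hx
  refine ⟨A, B, hAB, hA, ?_⟩
  rw [hAB] at h
  simp [List.count_append, List.count_cons, List.count_eq_zero.mpr hA] at h
  exact List.count_eq_zero.mp (by omega)

lemma count_two_decomp {x : ℕ} {w : List ℕ} (h : w.count x = 2) :
    ∃ A B C, w = A ++ x :: B ++ x :: C ∧ x ∉ A ∧ x ∉ B ∧ x ∉ C := by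
  have hx : x ∈ w := List.count_pos_iff.mp (by omega)
  obtain ⟨A, R, hAR, hA⟩ := mem_first_decomp hx
  rw [hAR] at h
  simp [List.count_append, List.count_cons, List.count_eq_zero.mpr hA] at h
  obtain ⟨B, C, hBC, hB, hC⟩ := count_one_decomp (x := x) (w := R) (by omega)
  exact ⟨A, B, C, by rw [hAR, hBC]; simp, hA, hB, hC⟩

def ψaux (u v : ℕ) (w : List ℕ) : List ℕ :=
  let A := w.takeWhile (· != u)
  let R := (w.dropWhile (· != u)).tail
  let B := R.takeWhile (· != u)
  let C := (R.dropWhile (· != u)).tail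
  if v ∈ B then A ++ u :: B ++ v :: C else A ++ v :: B ++ u :: C

def φaux (u v : ℕ) (w : List ℕ) : List ℕ :=
  let A := w.takeWhile (· != u)
  let R := (w.dropWhile (· != u)).tail
  let B := R.takeWhile (· != u)
  let C := (R.dropWhile (· != u)).tail
  if v ∈ B then A ++ v :: B ++ u :: C else A ++ u :: B ++ v :: C

lemma tw_eval {u : ℕ} {R : List ℕ} : ∀ {A : List ℕ}, u ∉ A →
    (A ++ u :: R).takeWhile (· != u) = A ∧ (A ++ u :: R).dropWhile (· != u) = u :: R := by
  intro A
  induction A with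
  | nil => intro _; constructor <;> simp [List.takeWhile, List.dropWhile]
  | cons a A ih =>
    intro hA
    have ha : (a != u) = true := by
      simp only [bne_iff_ne, ne_eq]
      exact fun h => hA (by simp [h])
    have := ih (fun h => hA (List.mem_cons_of_mem _ h))
    constructor
    · show ((a :: (A ++ u :: R)).takeWhile (· != u)) = a :: A
      rw [List.takeWhile_cons, if_pos ha, this.1]
    · show ((a :: (A ++ u :: R)).dropWhile (· != u)) = u :: R
      rw [List.dropWhile_cons, if_pos ha, this.2]

lemma ψaux_eval {u v : ℕ} {A B C : List ℕ} (hA : u ∉ A) (hB : u ∉ B) :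
    ψaux u v (A ++ u :: B ++ u :: C)
      = if v ∈ B then A ++ u :: B ++ v :: C else A ++ v :: B ++ u :: C := by
  have e0 : A ++ u :: B ++ u :: C = A ++ u :: (B ++ u :: C) := by simp
  have e1 := (tw_eval (R := B ++ u :: C) hA).1
  have e2 := (tw_eval (R := B ++ u :: C) hA).2
  have e3 := (tw_eval (R := C) hB).1
  have e4 := (tw_eval (R := C) hB).2
  unfold ψaux
  rw [e0, e1, e2]
  simp only [List.tail_cons, e3, e4, List.tail_cons]

lemma φaux_eval {u v : ℕ} {A B C : List ℕ} (hA : u ∉ A) (hB : u ∉ B) :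
    φaux u v (A ++ u :: B ++ u :: C)
      = if v ∈ B then A ++ v :: B ++ u :: C else A ++ u :: B ++ v :: C := by
  have e0 : A ++ u :: B ++ u :: C = A ++ u :: (B ++ u :: C) := by simp
  have e1 := (tw_eval (R := B ++ u :: C) hA).1
  have e2 := (tw_eval (R := B ++ u :: C) hA).2
  have e3 := (tw_eval (R := C) hB).1
  have e4 := (tw_eval (R := C) hB).2
  unfold φaux
  rw [e0, e1, e2]
  simp only [List.tail_cons, e3, e4, List.tail_cons]

lemma exists_perm_sublist {w : List ℕ} {n : ℕ}
    (h1 : ∀ k ∈ List.range' 1 n, k ∈ w) (h2 : ∀ x ∈ w, x ∈ List.range' 1 n) :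
    ∃ p : List ℕ, p.Perm (List.range' 1 n) ∧ p.Sublist w := by
  refine ⟨w.dedup, ?_, w.dedup_sublist⟩
  refine (List.perm_ext_iff_of_nodup (w.nodup_dedup) (List.nodup_range' (s := 1) (n := n))).mpr ?_
  intro a
  rw [List.mem_dedup]
  exact ⟨fun h => h2 a h, fun h => h1 a h⟩

lemma multiset_replace {A B C : List ℕ} {x y : ℕ} (T : Multiset ℕ)
    (h : (↑(A ++ x :: B ++ x :: C) : Multiset ℕ) = T + {x}) :
    (↑(A ++ x :: B ++ y :: C) : Multiset ℕ) = T + {y} ∧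
    (↑(A ++ y :: B ++ x :: C) : Multiset ℕ) = T + {y} := by
  have key : ∀ z : ℕ, Multiset.count z T + (if x = z then 1 else 0)
      = A.count z + B.count z + C.count z + (if z = x then 1 else 0) + (if z = x then 1 else 0) := by
    intro z
    have := congrArg (Multiset.count z) h
    simp only [Multiset.coe_count, Multiset.count_add, Multiset.count_singleton] at this
    simp only [List.count_append, List.count_cons, beq_iff_eq] at this
    split_ifs at this ⊢ <;> omega
  constructor <;>
  · refine Multiset.ext.mpr (fun z => ?_)
    have := key z
    simp only [Multiset.coe_count, Multiset.count_add, Multiset.count_singleton,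
      List.count_append, List.count_cons, beq_iff_eq]
    split_ifs at this ⊢ <;> omega



lemma headD_alt (A : List ℕ) (x : ℕ) (L M : List ℕ) :
    ((A ++ x :: L) ++ M).headD 0 = A.headD x := by
  cases A <;> rfl

lemma insertion_aux {n : ℕ} {w : List ℕ} {S' : Multiset ℕ}
    (hS' : ∀ s ∈ S', 1 ≤ s ∧ s ≤ n)
    (h : (↑w : Multiset ℕ) = ↑(List.range' 1 n) + S') : IsInsertion S' n w := by
  refine ⟨h, exists_perm_sublist ?_ ?_⟩
  · intro k hk
    have : k ∈ (↑w : Multiset ℕ) := by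
      rw [h]; exact Multiset.mem_add.mpr (Or.inl (by exact_mod_cast hk))
    exact_mod_cast this
  · intro x hx
    have hx' : x ∈ (↑w : Multiset ℕ) := by exact_mod_cast hx
    rw [h] at hx'
    apply List.mem_range'_1.mpr
    rcases Multiset.mem_add.mp hx' with h' | h'
    · have := List.mem_range'_1.mp (by exact_mod_cast h')
      exact ⟨this.1, this.2⟩
    · have := hS' x h'
      exact ⟨this.1, by omega⟩

lemma facts {n : ℕ} (hn : 3 ≤ n) {S : Multiset ℕ} (hS : ∀ s ∈ S, 1 ≤ s ∧ s ≤ n - 2)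
    {w : List ℕ} {u v : ℕ} (huv : (u = n ∧ v = n - 1) ∨ (u = n - 1 ∧ v = n))
    (hmul : (↑w : Multiset ℕ) = ↑(List.range' 1 n) + (S + {u}))
    (hflat : IsFlattened w) :
    (∀ x ∈ w, 1 ≤ x ∧ x ≤ n) ∧ w.count u = 2 ∧ w.count v = 1 ∧ w.headD 0 = 1 := by
  have hu1 : n - 1 ≤ u ∧ u ≤ n := by rcases huv with ⟨h,_⟩|⟨h,_⟩ <;> omega
  have hv1 : n - 1 ≤ v ∧ v ≤ n := by rcases huv with ⟨_,h⟩|⟨_,h⟩ <;> omega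
  have huvne : v ≠ u := by rcases huv with ⟨h,h'⟩|⟨h,h'⟩ <;> omega
  have hUS : u ∉ S := fun h => by have := hS u h; omega
  have hVS : v ∉ S := fun h => by have := hS v h; omega
  have hcu : w.count u = 2 := by
    have h0 := congrArg (Multiset.count u) hmul
    rw [Multiset.coe_count, Multiset.count_add, Multiset.count_add, Multiset.coe_count,
        Multiset.count_singleton, if_pos rfl, Multiset.count_eq_zero.mpr hUS,
        List.count_eq_one_of_mem (List.nodup_range' (s := 1) (n := n))
          (List.mem_range'_1.mpr ⟨by omega, by omega⟩)] at h0
    omega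
  have hcv : w.count v = 1 := by
    have h0 := congrArg (Multiset.count v) hmul
    rw [Multiset.coe_count, Multiset.count_add, Multiset.count_add, Multiset.coe_count,
        Multiset.count_singleton, if_neg huvne, Multiset.count_eq_zero.mpr hVS,
        List.count_eq_one_of_mem (List.nodup_range' (s := 1) (n := n))
          (List.mem_range'_1.mpr ⟨by omega, by omega⟩)] at h0
    omega
  have hall : ∀ x ∈ w, 1 ≤ x ∧ x ≤ n := by
    intro x hx
    have hx' : x ∈ (↑w : Multiset ℕ) := by exact_mod_cast hx
    rw [hmul] at hx'
    rcases Multiset.mem_add.mp hx' with h' | h'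
    · have := List.mem_range'_1.mp (by exact_mod_cast h')
      exact ⟨this.1, by omega⟩
    · rcases Multiset.mem_add.mp h' with h' | h'
      · have := hS x h'; exact ⟨this.1, by omega⟩
      · rw [Multiset.mem_singleton] at h'
        exact ⟨by omega, by omega⟩
  have hne : w ≠ [] := by intro h; rw [h] at hcu; simp at hcu
  have h1w : (1:ℕ) ∈ w := by
    have h1 : (1:ℕ) ∈ (↑w : Multiset ℕ) := by
      rw [hmul]
      exact Multiset.mem_add.mpr (Or.inl
        (by exact_mod_cast List.mem_range'_1.mpr ⟨le_rfl, by omega⟩))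
    exact_mod_cast h1
  have hhd : w.headD 0 = 1 := by
    have hle := head_le ((isFlattened_iff hne).mp hflat) h1w
    have hmem : w.headD 0 ∈ w := by
      cases w with
      | nil => exact absurd rfl hne
      | cons a l => exact List.mem_cons_self
    have := (hall _ hmem).1
    omega
  exact ⟨hall, hcu, hcv, hhd⟩

lemma psi_main {n : ℕ} (hn : 3 ≤ n) {S : Multiset ℕ} (hS : ∀ s ∈ S, 1 ≤ s ∧ s ≤ n - 2)
    {w : List ℕ} (hw : w ∈ flatIns (S + {n}) n) :
    ψaux n (n-1) w ∈ flatIns (S + {n - 1}) n ∧ numRuns (ψaux n (n-1) w) = numRuns w ∧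
      φaux (n-1) n (ψaux n (n-1) w) = w := by
  obtain ⟨⟨hmul, -⟩, hflat⟩ := hw
  obtain ⟨hall, hcu, hcv, hhd⟩ := facts hn hS (Or.inl ⟨rfl, rfl⟩) hmul hflat
  obtain ⟨A, B, C, hw_eq, hA, hB, hC⟩ := count_two_decomp hcu
  have hne : w ≠ [] := by rw [hw_eq]; simp
  have hsplit : A.count (n-1) + B.count (n-1) + C.count (n-1) = 1 := by
    rw [hw_eq] at hcv
    simp only [List.count_append, List.count_cons, beq_iff_eq] at hcv
    split_ifs at hcv <;> omega
  have hmemw : ∀ x : ℕ, x ∈ A ∨ x ∈ B ∨ x ∈ C → x ∈ w := by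
    intro x hx; rw [hw_eq]
    rcases hx with h|h|h <;> simp [h]
  have hA' : ∀ a ∈ A, a ≤ n - 1 := fun a ha => by
    have h1 := (hall a (hmemw a (Or.inl ha))).2
    have h2 : a ≠ n := fun h => hA (h ▸ ha)
    omega
  have hB' : ∀ b ∈ B, b ≤ n - 1 := fun b hb => by
    have h1 := (hall b (hmemw b (Or.inr (Or.inl hb)))).2
    have h2 : b ≠ n := fun h => hB (h ▸ hb)
    omega
  have hC' : ∀ c ∈ C, c ≤ n - 1 := fun c hc => by
    have h1 := (hall c (hmemw c (Or.inr (Or.inr hc)))).2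
    have h2 : c ≠ n := fun h => hC (h ▸ hc)
    omega
  have hAne : A ≠ [] := by
    intro h
    rw [h] at hw_eq
    rw [hw_eq] at hhd
    simp at hhd
    omega
  have hhead_w : w.headD 0 = A.headD n := by
    rw [hw_eq]; exact headD_alt A n B (n :: C)
  have hTmul : (↑(A ++ n :: B ++ n :: C) : Multiset ℕ)
      = (↑(List.range' 1 n) + S) + {n} := by
    rw [← hw_eq, hmul, add_assoc]
  by_cases hvB : (n-1) ∈ B
  · -- n-1 between the two n's: replace the second n
    have hbpos : 1 ≤ B.count (n-1) := List.count_pos_iff.mpr hvB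
    have hvA : (n-1) ∉ A := List.count_eq_zero.mp (by omega)
    have hvC : (n-1) ∉ C := List.count_eq_zero.mp (by omega)
    have hcB : B.count (n-1) = 1 := by omega
    have hψ : ψaux n (n-1) w = A ++ n :: B ++ (n-1) :: C := by
      rw [hw_eq, ψaux_eval hA hB, if_pos hvB]
    rw [hψ]
    set w' := A ++ n :: B ++ (n-1) :: C with hw'
    have hth : th w = th w' := by
      rw [hw_eq, hw']
      exact shapeB A B C n n (n-1)
        (fun h => absurd (h ▸ hvB) (List.not_mem_nil))
        (fun b hb => ⟨by have := hB' b hb; omega, hB' b hb⟩)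
        (fun c hc => by
          have h1 := hC' c hc
          have h2 : c ≠ n - 1 := fun h => hvC (h ▸ hc)
          omega)
    have hhead' : w'.headD 0 = w.headD 0 := by
      rw [hhead_w, hw', headD_alt A n B ((n-1) :: C)]
    have hne' : w' ≠ [] := by rw [hw']; simp
    obtain ⟨hflat_iff, hruns⟩ := flat_run_transfer hne hne' hhead'.symm hth
    have hmul' : (↑w' : Multiset ℕ) = ↑(List.range' 1 n) + (S + {n-1}) := by
      rw [hw', (multiset_replace _ hTmul).1, add_assoc]
    obtain ⟨B₁, B₂, hBeq, hnb1, hnb2⟩ := count_one_decomp hcB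
    have hcomp : φaux (n-1) n w' = w := by
      have e : w' = (A ++ n :: B₁) ++ (n-1) :: B₂ ++ (n-1) :: C := by
        rw [hw', hBeq]; simp
      have hA2 : (n-1) ∉ A ++ n :: B₁ := by
        simp only [List.mem_append, List.mem_cons]
        push_neg
        exact ⟨hvA, by omega, hnb1⟩
      have hnB2 : n ∉ B₂ := fun h => hB (by rw [hBeq]; simp [h])
      rw [e, φaux_eval hA2 hnb2, if_neg hnB2, hw_eq, hBeq]
      simp
    refine ⟨⟨insertion_aux ?_ hmul', hflat_iff.mp hflat⟩, hruns.symm, hcomp⟩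
    intro s hs
    rcases Multiset.mem_add.mp hs with h | h
    · have := hS s h; exact ⟨this.1, by omega⟩
    · rw [Multiset.mem_singleton] at h; exact ⟨by omega, by omega⟩
  · -- replace the first n
    have hBc : B.count (n-1) = 0 := List.count_eq_zero.mpr hvB
    have hψ : ψaux n (n-1) w = A ++ (n-1) :: B ++ n :: C := by
      rw [hw_eq, ψaux_eval hA hB, if_neg hvB]
    rw [hψ]
    set w' := A ++ (n-1) :: B ++ n :: C with hw'
    have hth : th w = th w' := by
      rw [hw_eq, hw']
      exact shapeA A B C n (n-1) n
        (fun a ha => ⟨(hall a (hmemw a (Or.inl ha))).2, hA' a ha⟩)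
        (fun _ => by constructor <;> omega)
        (fun b hb => by
          have h1 := hB' b hb
          have h2 : b ≠ n - 1 := fun h => hvB (h ▸ hb)
          omega)
    have hhead' : w'.headD 0 = w.headD 0 := by
      rw [hhead_w, hw', headD_alt A (n-1) B (n :: C)]
      cases A with
      | nil => exact absurd rfl hAne
      | cons a A' => rfl
    have hne' : w' ≠ [] := by rw [hw']; simp
    obtain ⟨hflat_iff, hruns⟩ := flat_run_transfer hne hne' hhead'.symm hth
    have hmul' : (↑w' : Multiset ℕ) = ↑(List.range' 1 n) + (S + {n-1}) := by
      rw [hw', (multiset_replace _ hTmul).2, add_assoc]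
    have hcomp : φaux (n-1) n w' = w := by
      by_cases hvA2 : (n-1) ∈ A
      · have hcA : A.count (n-1) = 1 := by
          have := List.count_pos_iff.mpr hvA2; omega
        obtain ⟨A₁, A₂, hAeq, hna1, hna2⟩ := count_one_decomp hcA
        have e : w' = A₁ ++ (n-1) :: A₂ ++ (n-1) :: (B ++ n :: C) := by
          rw [hw', hAeq]; simp
        have hnA2 : n ∉ A₂ := fun h => hA (by rw [hAeq]; simp [h])
        rw [e, φaux_eval hna1 hna2, if_neg hnA2, hw_eq, hAeq]
        simp
      · have hvC : (n-1) ∈ C := by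
          by_contra hvC
          have h1 : A.count (n-1) = 0 := List.count_eq_zero.mpr hvA2
          have h2 : C.count (n-1) = 0 := List.count_eq_zero.mpr hvC
          omega
        have hcC : C.count (n-1) = 1 := by
          have h1 : A.count (n-1) = 0 := List.count_eq_zero.mpr hvA2
          have := List.count_pos_iff.mpr hvC
          omega
        obtain ⟨C₁, C₂, hCeq, hnc1, hnc2⟩ := count_one_decomp hcC
        have e : w' = A ++ (n-1) :: (B ++ n :: C₁) ++ (n-1) :: C₂ := by
          rw [hw', hCeq]; simp
        have hB2 : (n-1) ∉ B ++ n :: C₁ := by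
          simp only [List.mem_append, List.mem_cons]
          push_neg
          exact ⟨hvB, by omega, hnc1⟩
        have hnmem : n ∈ B ++ n :: C₁ := by simp
        rw [e, φaux_eval hvA2 hB2, if_pos hnmem, hw_eq, hCeq]
        simp
    refine ⟨⟨insertion_aux ?_ hmul', hflat_iff.mp hflat⟩, hruns.symm, hcomp⟩
    intro s hs
    rcases Multiset.mem_add.mp hs with h | h
    · have := hS s h; exact ⟨this.1, by omega⟩
    · rw [Multiset.mem_singleton] at h; exact ⟨by omega, by omega⟩

lemma phi_main {n : ℕ} (hn : 3 ≤ n) {S : Multiset ℕ} (hS : ∀ s ∈ S, 1 ≤ s ∧ s ≤ n - 2)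
    {v : List ℕ} (hv : v ∈ flatIns (S + {n - 1}) n) :
    φaux (n-1) n v ∈ flatIns (S + {n}) n ∧ ψaux n (n-1) (φaux (n-1) n v) = v := by
  obtain ⟨⟨hmul, -⟩, hflat⟩ := hv
  obtain ⟨hall, hcu, hcv, hhd⟩ := facts hn hS (Or.inr ⟨rfl, rfl⟩) hmul hflat
  obtain ⟨A, B, C, hv_eq, hA, hB, hC⟩ := count_two_decomp hcu
  have hne : v ≠ [] := by rw [hv_eq]; simp
  have hsplit : A.count n + B.count n + C.count n = 1 := by
    rw [hv_eq] at hcv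
    simp only [List.count_append, List.count_cons, beq_iff_eq] at hcv
    split_ifs at hcv <;> omega
  have hmemv : ∀ x : ℕ, x ∈ A ∨ x ∈ B ∨ x ∈ C → x ∈ v := by
    intro x hx; rw [hv_eq]
    rcases hx with h|h|h <;> simp [h]
  have hA' : ∀ a ∈ A, a ≤ n ∧ a ≠ n - 1 := fun a ha =>
    ⟨(hall a (hmemv a (Or.inl ha))).2, fun h => hA (h ▸ ha)⟩
  have hB' : ∀ b ∈ B, b ≤ n ∧ b ≠ n - 1 := fun b hb =>
    ⟨(hall b (hmemv b (Or.inr (Or.inl hb)))).2, fun h => hB (h ▸ hb)⟩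
  have hC' : ∀ c ∈ C, c ≤ n ∧ c ≠ n - 1 := fun c hc =>
    ⟨(hall c (hmemv c (Or.inr (Or.inr hc)))).2, fun h => hC (h ▸ hc)⟩
  have hAne : A ≠ [] := by
    intro h
    rw [h] at hv_eq
    rw [hv_eq] at hhd
    simp at hhd
    omega
  have hhead_v : v.headD 0 = A.headD (n-1) := by
    rw [hv_eq]; exact headD_alt A (n-1) B ((n-1) :: C)
  have hTmul : (↑(A ++ (n-1) :: B ++ (n-1) :: C) : Multiset ℕ)
      = (↑(List.range' 1 n) + S) + {n-1} := by
    rw [← hv_eq, hmul, add_assoc]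
  by_cases hnB : n ∈ B
  · -- n between the two (n-1)'s: replace the first n-1
    have hbpos : 1 ≤ B.count n := List.count_pos_iff.mpr hnB
    have hnA : n ∉ A := List.count_eq_zero.mp (by omega)
    have hnC : n ∉ C := List.count_eq_zero.mp (by omega)
    have hcB : B.count n = 1 := by omega
    have hφ : φaux (n-1) n v = A ++ n :: B ++ (n-1) :: C := by
      rw [hv_eq, φaux_eval hA hB, if_pos hnB]
    rw [hφ]
    set w' := A ++ n :: B ++ (n-1) :: C with hw'
    have hth : th v = th w' := by
      rw [hv_eq, hw']
      exact shapeA A B C (n-1) n (n-1)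
        (fun a ha => by
          have h1 := hA' a ha
          have h2 : a ≠ n := fun h => hnA (h ▸ ha)
          exact ⟨by omega, by omega⟩)
        (fun h => absurd (h ▸ hnB) (List.not_mem_nil))
        (fun b hb => by have := hB' b hb; omega)
    have hhead' : w'.headD 0 = v.headD 0 := by
      rw [hhead_v, hw', headD_alt A n B ((n-1) :: C)]
      cases A with
      | nil => exact absurd rfl hAne
      | cons a A' => rfl
    have hne' : w' ≠ [] := by rw [hw']; simp
    obtain ⟨hflat_iff, hruns⟩ := flat_run_transfer hne hne' hhead'.symm hth
    have hmul' : (↑w' : Multiset ℕ) = ↑(List.range' 1 n) + (S + {n}) := by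
      rw [hw', (multiset_replace _ hTmul).2, add_assoc]
    obtain ⟨B₁, B₂, hBeq, hnb1, hnb2⟩ := count_one_decomp hcB
    have hcomp : ψaux n (n-1) w' = v := by
      have e : w' = A ++ n :: B₁ ++ n :: (B₂ ++ (n-1) :: C) := by
        rw [hw', hBeq]; simp
      have hx : (n-1) ∉ B₁ := fun h => hB (by rw [hBeq]; simp [h])
      rw [e, ψaux_eval hnA hnb1, if_neg hx, hv_eq, hBeq]
      simp
    refine ⟨⟨insertion_aux ?_ hmul', hflat_iff.mp hflat⟩, hcomp⟩
    intro s hs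
    rcases Multiset.mem_add.mp hs with h | h
    · have := hS s h; exact ⟨this.1, by omega⟩
    · rw [Multiset.mem_singleton] at h; exact ⟨by omega, by omega⟩
  · -- replace the second n-1
    have hBc : B.count n = 0 := List.count_eq_zero.mpr hnB
    have hφ : φaux (n-1) n v = A ++ (n-1) :: B ++ n :: C := by
      rw [hv_eq, φaux_eval hA hB, if_neg hnB]
    rw [hφ]
    set w' := A ++ (n-1) :: B ++ n :: C with hw'
    have hth : th v = th w' := by
      rw [hv_eq, hw']
      exact shapeB A B C (n-1) (n-1) n
        (fun _ => ⟨by omega, by omega⟩)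
        (fun b hb => by
          have h1 := hB' b hb
          have h2 : b ≠ n := fun h => hnB (h ▸ hb)
          exact ⟨by omega, by omega⟩)
        (fun c hc => by have := hC' c hc; omega)
    have hhead' : w'.headD 0 = v.headD 0 := by
      rw [hhead_v, hw', headD_alt A (n-1) B (n :: C)]
    have hne' : w' ≠ [] := by rw [hw']; simp
    obtain ⟨hflat_iff, hruns⟩ := flat_run_transfer hne hne' hhead'.symm hth
    have hmul' : (↑w' : Multiset ℕ) = ↑(List.range' 1 n) + (S + {n}) := by
      rw [hw', (multiset_replace _ hTmul).1, add_assoc]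
    have hcomp : ψaux n (n-1) w' = v := by
      by_cases hnA2 : n ∈ A
      · have hcA : A.count n = 1 := by
          have := List.count_pos_iff.mpr hnA2; omega
        obtain ⟨A₁, A₂, hAeq, hna1, hna2⟩ := count_one_decomp hcA
        have e : w' = A₁ ++ n :: (A₂ ++ (n-1) :: B) ++ n :: C := by
          rw [hw', hAeq]; simp
        have hnAB : n ∉ A₂ ++ (n-1) :: B := by
          simp only [List.mem_append, List.mem_cons]
          push_neg
          exact ⟨hna2, by omega, hnB⟩
        have hmem : (n-1) ∈ A₂ ++ (n-1) :: B := by simp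
        rw [e, ψaux_eval hna1 hnAB, if_pos hmem, hv_eq, hAeq]
        simp
      · have hnC2 : n ∈ C := by
          by_contra hnC2
          have h1 : A.count n = 0 := List.count_eq_zero.mpr hnA2
          have h2 : C.count n = 0 := List.count_eq_zero.mpr hnC2
          omega
        have hcC : C.count n = 1 := by
          have h1 : A.count n = 0 := List.count_eq_zero.mpr hnA2
          have := List.count_pos_iff.mpr hnC2
          omega
        obtain ⟨C₁, C₂, hCeq, hnc1, hnc2⟩ := count_one_decomp hcC
        have e : w' = (A ++ (n-1) :: B) ++ n :: C₁ ++ n :: C₂ := by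
          rw [hw', hCeq]; simp
        have hnAB : n ∉ A ++ (n-1) :: B := by
          simp only [List.mem_append, List.mem_cons]
          push_neg
          exact ⟨hnA2, by omega, hnB⟩
        have hnmem : (n-1) ∉ C₁ := fun h => hC (by rw [hCeq]; simp [h])
        rw [e, ψaux_eval hnAB hnc1, if_neg hnmem, hv_eq, hCeq]
        simp
    refine ⟨⟨insertion_aux ?_ hmul', hflat_iff.mp hflat⟩, hcomp⟩
    intro s hs
    rcases Multiset.mem_add.mp hs with h | h
    · have := hS s h; exact ⟨this.1, by omega⟩
    · rw [Multiset.mem_singleton] at h; exact ⟨by omega, by omega⟩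

end FlatAux

open FlatPF in
/-- For `S` with elements in `[n-2]`, the flattened `(S ∪ {n})`-insertion parking
functions of order `n` are in bijection with the flattened `(S ∪ {n-1})`-insertion
parking functions of order `n`, via a bijection preserving the number of runs. -/
theorem stmt6 (n : ℕ) (hn : 3 ≤ n) (S : Multiset ℕ) (hS : ∀ s ∈ S, 1 ≤ s ∧ s ≤ n - 2) :
    ∃ ψ : List ℕ → List ℕ,
      Set.BijOn ψ (flatIns (S + {n}) n) (flatIns (S + {n - 1}) n) ∧
      ∀ w ∈ flatIns (S + {n}) n, numRuns (ψ w) = numRuns w := by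
  refine ⟨FlatAux.ψaux n (n-1), ?_, fun w hw => (FlatAux.psi_main hn hS hw).2.1⟩
  exact Set.InvOn.bijOn
    ⟨fun w hw => (FlatAux.psi_main hn hS hw).2.2, fun v hv => (FlatAux.phi_main hn hS hv).2⟩
    (fun w hw => (FlatAux.psi_main hn hS hw).1)
    (fun v hv => (FlatAux.phi_main hn hS hv).1)
end

section
/- For n >= 3 and any 2 <= l <= n, the number of flattened ({l})-insertion parking functions of order n with exactly 2 runs equals sum_{i=0}^{n-3} 2^i * (n-1-i). -/
namespace FlatPF


lemma chain'_cons {α : Type*} {R : α → α → Prop} {a b : α} {l : List α} :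
    List.Chain' R (a :: b :: l) ↔ R a b ∧ List.Chain' R (b :: l) := List.isChain_cons_cons

lemma chain'_iff_pairwise {α : Type*} {R : α → α → Prop} [Trans R R R] {l : List α} :
    List.Chain' R l ↔ List.Pairwise R l := List.isChain_iff_pairwise

@[simp] lemma chain'_singleton {α : Type*} {R : α → α → Prop} (a : α) : List.Chain' R [a] :=
  List.isChain_singleton a

lemma runs_spec (w : List ℕ) :
    (runs w).flatten = w ∧ (∀ r ∈ runs w, r ≠ [] ∧ r.Chain' (· ≤ ·)) ∧
    List.Chain' (fun r s => s.headD 0 < r.getLastD 0) (runs w) := by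
  induction w with
  | nil => simp [runs, List.Chain']
  | cons a l ih =>
    obtain ⟨hj, hne, hch⟩ := ih
    rcases h : runs l with _ | ⟨r, rs⟩
    · rw [h] at hj; simp at hj
      subst hj
      simp [runs, List.Chain']
    · rcases r with _ | ⟨b, t⟩
      · exact absurd rfl ((hne _ (h ▸ List.mem_cons_self)).1)
      · rw [h] at hj hne hch
        by_cases hab : a ≤ b
        · refine ⟨?_, ?_, ?_⟩
          · simp [runs, h, hab]; simpa using hj
          · intro r hr
            rw [runs, h] at hr
            simp only [hab, if_true] at hr
            rcases List.mem_cons.1 hr with rfl | hr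
            · exact ⟨by simp, chain'_cons.2 ⟨hab, (hne _ (List.mem_cons_self)).2⟩⟩
            · exact hne _ (List.mem_cons_of_mem _ hr)
          · rw [runs, h]
            simp only [hab, if_true]
            rcases rs with _ | ⟨s, rs'⟩
            · simp [List.Chain']
            · rw [chain'_cons] at hch ⊢
              exact ⟨by simpa using hch.1, hch.2⟩
        · refine ⟨?_, ?_, ?_⟩
          · simp [runs, h, hab]; simpa using hj
          · intro r hr
            rw [runs, h] at hr
            simp only [hab, if_false] at hr
            rcases List.mem_cons.1 hr with rfl | hr
            · exact ⟨by simp, by simp [List.Chain']⟩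
            · exact hne _ hr
          · rw [runs, h]
            simp only [hab, if_false]
            rw [chain'_cons]
            exact ⟨by simpa using Nat.lt_of_not_le hab, hch⟩

lemma runs_sorted {A : List ℕ} (hA : A ≠ []) (h : A.Chain' (· ≤ ·)) : runs A = [A] := by
  induction A with
  | nil => simp at hA
  | cons a l ih =>
    rcases l with _ | ⟨b, t⟩
    · simp [runs]
    · rw [chain'_cons] at h
      rw [runs, ih (by simp) h.2]
      simp [h.1]

lemma runs_two {A B : List ℕ} (hA : A ≠ []) (hB : B ≠ []) (sA : A.Chain' (· ≤ ·))
    (sB : B.Chain' (· ≤ ·)) (hd : B.headD 0 < A.getLastD 0) : runs (A ++ B) = [A, B] := by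
  induction A with
  | nil => simp at hA
  | cons a l ih =>
    rcases l with _ | ⟨c, t⟩
    · rcases B with _ | ⟨b, u⟩
      · simp at hB
      · rw [List.singleton_append, runs, runs_sorted hB sB]
        have hba : b < a := by simpa using hd
        simp [Nat.not_le.2 hba]
    · rw [chain'_cons] at sA
      have h2 : B.headD 0 < (c :: t).getLastD 0 := by
        simpa using hd
      rw [List.cons_append, runs, ih (by simp) sA.2 h2]
      simp [sA.1]



lemma getLastD_indep {L : List ℕ} (h : L ≠ []) (d d' : ℕ) : L.getLastD d = L.getLastD d' := by
  induction L using List.reverseRecOn with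
  | nil => simp at h
  | append_singleton t x _ => simp

lemma headD_mem {L : List ℕ} (h : L ≠ []) : L.headD 0 ∈ L := by
  cases L with
  | nil => simp at h
  | cons a t => simp

lemma headD_min {L : List ℕ} (s : L.Chain' (· ≤ ·)) : ∀ x ∈ L, L.headD 0 ≤ x := by
  cases L with
  | nil => simp
  | cons a t =>
    rw [chain'_iff_pairwise, List.pairwise_cons] at s
    intro x hx
    rcases List.mem_cons.1 hx with rfl | hx
    · simp
    · simpa using s.1 x hx

lemma getLastD_mem {L : List ℕ} (h : L ≠ []) : L.getLastD 0 ∈ L := by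
  induction L with
  | nil => simp at h
  | cons a t ih =>
    cases t with
    | nil => simp
    | cons b u =>
      rw [List.getLastD_cons]
      have := ih (by simp)
      rw [getLastD_indep (by simp) a 0]
      exact List.mem_cons_of_mem _ this

lemma getLastD_max {L : List ℕ} (s : L.Chain' (· ≤ ·)) : ∀ x ∈ L, x ≤ L.getLastD 0 := by
  induction L with
  | nil => simp
  | cons a t ih =>
    rw [chain'_iff_pairwise, List.pairwise_cons] at s
    cases t with
    | nil => simp
    | cons b u =>
      intro x hx
      rw [List.getLastD_cons, getLastD_indep (by simp) a 0]
      rcases List.mem_cons.1 hx with rfl | hx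
      · exact le_trans (s.1 _ (List.mem_cons_self))
          (ih (chain'_iff_pairwise.2 s.2) _ (List.mem_cons_self))
      · exact ih (chain'_iff_pairwise.2 s.2) x hx



def MM (n l : ℕ) : Multiset ℕ := l ::ₘ (↑(List.range' 1 n) : Multiset ℕ)

lemma count_MM (n l : ℕ) (x : ℕ) :
    (MM n l).count x = (if x = l then 1 else 0) + (if 1 ≤ x ∧ x ≤ n then 1 else 0) := by
  rw [MM, Multiset.count_cons, Multiset.coe_count]
  have hc : List.count x (List.range' 1 n) = if 1 ≤ x ∧ x ≤ n then 1 else 0 := by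
    by_cases hx : 1 ≤ x ∧ x ≤ n
    · rw [if_pos hx, List.count_eq_one_of_mem (List.nodup_range' (s := 1) (n := n))
        (List.mem_range'_1.2 ⟨hx.1, by omega⟩)]
    · rw [if_neg hx, List.count_eq_zero_of_not_mem]
      intro hmem
      exact hx (by have := List.mem_range'_1.1 hmem; omega)
  rw [hc]; ring

lemma mem_MM {n l : ℕ} (hl : 1 ≤ l) (hln : l ≤ n) (x : ℕ) :
    x ∈ MM n l ↔ 1 ≤ x ∧ x ≤ n := by
  rw [← Multiset.count_pos, count_MM n l]
  by_cases h : 1 ≤ x ∧ x ≤ n <;> by_cases hx : x = l <;>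
    simp [h, hx] <;> omega

lemma count_MM_l {n l : ℕ} (hl : 1 ≤ l) (hln : l ≤ n) : (MM n l).count l = 2 := by
  rw [count_MM, if_pos rfl, if_pos ⟨hl, hln⟩]

noncomputable def allB (n l : ℕ) : Finset (Multiset ℕ) :=
  ((Finset.range 3) ×ˢ ((Finset.Icc 2 n).erase l).powerset).image
    (fun p => Multiset.replicate p.1 l + p.2.1)

lemma mem_allB {n l : ℕ} (hl : 2 ≤ l) (hln : l ≤ n) {β : Multiset ℕ} :
    β ∈ allB n l ↔ β ≤ MM n l ∧ 1 ∉ β := by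
  constructor
  · rintro hβ
    simp only [allB, Finset.mem_image, Finset.mem_product, Finset.mem_range,
      Finset.mem_powerset] at hβ
    obtain ⟨⟨j, S⟩, ⟨hj, hS⟩, rfl⟩ := hβ
    have hSsub : ∀ x ∈ S, 2 ≤ x ∧ x ≤ n ∧ x ≠ l := by
      intro x hx
      have := hS hx
      simp only [Finset.mem_erase, Finset.mem_Icc] at this
      exact ⟨this.2.1, this.2.2, this.1⟩
    constructor
    · rw [Multiset.le_iff_count]
      intro x
      rw [Multiset.count_add, Multiset.count_replicate, count_MM n l]
      rcases eq_or_ne x l with rfl | hx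
      · have hc : Multiset.count x S.1 = 0 := by
          rw [Multiset.count_eq_zero]
          intro h
          exact (hSsub x h).2.2 rfl
        rw [hc, if_pos rfl, if_pos rfl, if_pos ⟨by omega, hln⟩]
        omega
      · rw [if_neg (fun h => hx h.symm), if_neg hx]
        by_cases hxS : x ∈ S
        · obtain ⟨h2, hxn, -⟩ := hSsub x hxS
          rw [if_pos ⟨by omega, hxn⟩,
            Multiset.count_eq_one_of_mem S.nodup hxS]
        · rw [Multiset.count_eq_zero.2 (fun h => hxS h)]
          omega
    · intro h1
      rcases Multiset.mem_add.1 h1 with h | h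
      · have := Multiset.eq_of_mem_replicate h; omega
      · have := hSsub 1 h; omega
  · rintro ⟨hle, h1⟩
    simp only [allB, Finset.mem_image, Finset.mem_product, Finset.mem_range,
      Finset.mem_powerset]
    refine ⟨⟨β.count l, β.toFinset.erase l⟩, ⟨?_, ?_⟩, ?_⟩
    · have := Multiset.le_iff_count.1 hle l
      rw [count_MM_l (by omega) hln] at this
      omega
    · intro x hx
      simp only [Finset.mem_erase, Multiset.mem_toFinset] at hx
      have hmem := (mem_MM (by omega) hln x).1 (Multiset.mem_of_le hle hx.2)
      simp only [Finset.mem_erase, Finset.mem_Icc]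
      refine ⟨hx.1, ?_, hmem.2⟩
      rcases Nat.lt_or_ge x 2 with h | h
      · have hx1 : x = 1 := by omega
        exact absurd (hx1 ▸ hx.2) h1
      · exact h
    · dsimp only
      rw [Multiset.ext]
      intro x
      rw [Multiset.count_add, Multiset.count_replicate]
      have hz : Multiset.count l ((β.toFinset.erase l)).val = 0 := by
        rw [Multiset.count_eq_zero, Finset.mem_val]
        simp
      rcases eq_or_ne x l with rfl | hx
      · rw [if_pos rfl, hz]
        omega
      · rw [if_neg (fun h => hx h.symm)]
        have hcount : Multiset.count x β ≤ 1 := by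
          have := Multiset.le_iff_count.1 hle x
          rw [count_MM n l, if_neg hx] at this
          split at this <;> omega
        by_cases hxb : x ∈ β
        · have h1' : Multiset.count x β = 1 := by
            have := Multiset.count_pos.2 hxb; omega
          have hc1 : Multiset.count x (β.toFinset.erase l).1 = 1 := by
            apply Multiset.count_eq_one_of_mem (Finset.nodup _)
            simp only [Finset.mem_val, Finset.mem_erase, Multiset.mem_toFinset]
            exact ⟨hx, hxb⟩
          omega
        · have h0 : Multiset.count x β = 0 := Multiset.count_eq_zero.2 hxb
          have hc0 : Multiset.count x (β.toFinset.erase l).1 = 0 := by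
            rw [Multiset.count_eq_zero]
            simp only [Finset.mem_val, Finset.mem_erase, Multiset.mem_toFinset]
            exact fun h => hxb h.2
          omega

lemma card_allB {n l : ℕ} (hn : 3 ≤ n) (hl : 2 ≤ l) (hln : l ≤ n) :
    (allB n l).card = 3 * 2 ^ (n - 2) := by
  rw [allB, Finset.card_image_of_injOn, Finset.card_product, Finset.card_range,
    Finset.card_powerset, Finset.card_erase_of_mem (by simp [Finset.mem_Icc]; omega),
    Nat.card_Icc]
  · have h : n + 1 - 2 - 1 = n - 2 := by omega
    rw [h]
  · rintro ⟨j, S⟩ hjS ⟨j', S'⟩ hjS' heq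
    simp only [Finset.coe_product, Set.mem_prod, Finset.mem_coe, Finset.mem_range,
      Finset.mem_powerset] at hjS hjS'
    have hlS : l ∉ S := fun h => by simpa using (hjS.2 h)
    have hlS' : l ∉ S' := fun h => by simpa using (hjS'.2 h)
    dsimp only at heq
    have hj : j = j' := by
      have := congrArg (Multiset.count l) heq
      rw [Multiset.count_add, Multiset.count_add, Multiset.count_replicate,
        Multiset.count_replicate, Multiset.count_eq_zero.2 (by simpa using hlS),
        Multiset.count_eq_zero.2 (by simpa using hlS')] at this
      simpa using this
    subst hj
    have hS : S.1 = S'.1 := add_left_cancel heq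
    simp [Finset.val_inj.1 hS]

def Bad (n l : ℕ) (β : Multiset ℕ) : Prop := ∀ a ∈ MM n l - β, ∀ b ∈ β, a ≤ b

noncomputable def badF (n l : ℕ) : Finset (Multiset ℕ) :=
  insert (l ::ₘ (MM n l).filter (l < ·))
    ((Finset.Icc 2 n).image (fun k => (MM n l).filter (k ≤ ·)))

lemma count_filter_ge (n l k x : ℕ) :
    ((MM n l).filter (k ≤ ·)).count x = if k ≤ x then (MM n l).count x else 0 :=
  Multiset.count_filter

lemma bad_iff {n l : ℕ} (hl : 2 ≤ l) (hln : l ≤ n) {β : Multiset ℕ}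
    (hβ : β ≤ MM n l) (h1 : 1 ∉ β) (h0 : β ≠ 0) :
    Bad n l β ↔ β ∈ badF n l := by
  constructor
  · intro hbad
    -- minimal element k of β
    set L := β.sort (· ≤ ·) with hL
    have hLne : L ≠ [] := by
      intro h
      apply h0
      have := Multiset.sort_eq β (· ≤ ·)
      rw [← hL, h] at this
      simpa using this.symm
    set k := L.headD 0 with hk
    have hkβ : k ∈ β := by
      rw [← Multiset.sort_eq β (· ≤ ·), ← hL, Multiset.mem_coe]
      exact headD_mem hLne
    have hkmin : ∀ b ∈ β, k ≤ b := by
      intro b hb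
      rw [← Multiset.sort_eq β (· ≤ ·), ← hL, Multiset.mem_coe] at hb
      exact headD_min (chain'_iff_pairwise.2 (Multiset.pairwise_sort _ _)) b hb
    have hkM := (mem_MM (by omega) hln k).1 (Multiset.mem_of_le hβ hkβ)
    have hk2 : 2 ≤ k := by
      rcases Nat.lt_or_ge k 2 with h | h
      · have : k = 1 := by omega
        exact absurd (this ▸ hkβ) h1
      · exact h
    -- counts above k
    have habove : ∀ x, k < x → β.count x = (MM n l).count x := by
      intro x hx
      by_contra hne
      have hlt : β.count x < (MM n l).count x :=
        lt_of_le_of_ne (Multiset.le_iff_count.1 hβ x) hne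
      have hxmem : x ∈ MM n l - β := by
        rw [← Multiset.count_pos, Multiset.count_sub]
        omega
      exact absurd (hbad x hxmem k hkβ) (by omega)
    have hbelow : ∀ x, x < k → β.count x = 0 := by
      intro x hx
      rw [Multiset.count_eq_zero]
      intro hmem
      exact absurd (hkmin x hmem) (by omega)
    by_cases hc : β.count k = (MM n l).count k
    · apply Finset.mem_insert_of_mem
      rw [Finset.mem_image]
      refine ⟨k, Finset.mem_Icc.2 ⟨hk2, hkM.2⟩, ?_⟩
      rw [Multiset.ext]
      intro x
      rw [count_filter_ge]
      rcases Nat.lt_trichotomy x k with h | rfl | h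
      · rw [if_neg (by omega), (hbelow x h)]
      · rw [if_pos le_rfl, hc]
      · rw [if_pos (by omega), habove x h]
    · have hcnt := Multiset.le_iff_count.1 hβ k
      have hkpos := Multiset.count_pos.2 hkβ
      have hkMem : k ∈ MM n l - β := by
        rw [← Multiset.count_pos, Multiset.count_sub]
        omega
      -- count k M ≥ 2 hence k = l
      have h2 : 2 ≤ (MM n l).count k := by omega
      have hkl : k = l := by
        rw [count_MM n l] at h2
        by_contra hne
        rw [if_neg hne] at h2
        split at h2 <;> omega
      rw [hkl] at hc hcnt habove hbelow hkpos
      rw [count_MM_l (by omega) hln] at hc hcnt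
      have hck : β.count l = 1 := by omega
      have hβeq : β = l ::ₘ (MM n l).filter (l < ·) := by
        rw [Multiset.ext]
        intro x
        rw [Multiset.count_cons, Multiset.count_filter]
        rcases Nat.lt_trichotomy x l with h | rfl | h
        · rw [if_neg (by omega), if_neg (by omega), hbelow x h]
        · rw [if_neg (by omega), if_pos rfl, hck]
        · rw [if_pos (by omega), if_neg (by omega), habove x h]
          omega
      rw [hβeq]
      exact Finset.mem_insert_self _ _
  · intro hmem
    rcases Finset.mem_insert.1 hmem with rfl | himg
    · intro a ha b hb
      have hal : a ≤ l := by
        by_contra hgt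
        rw [← Multiset.count_pos, Multiset.count_sub, Multiset.count_cons,
          if_neg (by omega), Multiset.count_filter, if_pos (by omega)] at ha
        omega
      rcases Multiset.mem_cons.1 hb with rfl | hb
      · exact hal
      · have := (Multiset.mem_filter.1 hb).2
        omega
    · obtain ⟨k, hk, rfl⟩ := Finset.mem_image.1 himg
      intro a ha b hb
      rw [Multiset.sub_filter_eq_filter_not, Multiset.mem_filter] at ha
      have := (Multiset.mem_filter.1 hb).2
      omega

lemma badF_subset_allB {n l : ℕ} (hl : 2 ≤ l) (hln : l ≤ n) :
    badF n l ⊆ allB n l := by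
  intro β hβ
  rw [mem_allB hl hln]
  rcases Finset.mem_insert.1 hβ with rfl | himg
  · constructor
    · rw [Multiset.le_iff_count]
      intro x
      rw [Multiset.count_cons, Multiset.count_filter]
      rcases eq_or_ne x l with rfl | hx
      · rw [if_pos rfl, if_neg (by omega), count_MM_l (by omega) hln]
        omega
      · rw [if_neg hx]
        split <;> omega
    · intro h
      rcases Multiset.mem_cons.1 h with h | h
      · omega
      · have := (Multiset.mem_filter.1 h).2
        omega
  · obtain ⟨k, hk, rfl⟩ := Finset.mem_image.1 himg
    rw [Finset.mem_Icc] at hk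
    constructor
    · exact Multiset.filter_le _ _
    · intro h
      have := (Multiset.mem_filter.1 h).2
      omega

lemma badF_ne_zero {n l : ℕ} (hl : 2 ≤ l) (hln : l ≤ n) :
    ∀ β ∈ badF n l, β ≠ 0 := by
  intro β hβ
  rcases Finset.mem_insert.1 hβ with rfl | himg
  · exact Multiset.cons_ne_zero
  · obtain ⟨k, hk, rfl⟩ := Finset.mem_image.1 himg
    rw [Finset.mem_Icc] at hk
    intro h
    have : k ∈ (MM n l).filter (k ≤ ·) :=
      Multiset.mem_filter.2 ⟨(mem_MM (by omega) hln k).2 ⟨by omega, hk.2⟩, le_rfl⟩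
    rw [h] at this
    simp at this

lemma card_badF {n l : ℕ} (hn : 3 ≤ n) (hl : 2 ≤ l) (hln : l ≤ n) :
    (badF n l).card = n := by
  rw [badF, Finset.card_insert_of_notMem, Finset.card_image_of_injOn, Nat.card_Icc]
  · omega
  · have key : ∀ a b : ℕ, 2 ≤ a → a ≤ n → a < b →
        (MM n l).filter (a ≤ ·) ≠ (MM n l).filter (b ≤ ·) := by
      intro a b ha han hab heq
      have h1 : ((MM n l).filter (a ≤ ·)).count a = (MM n l).count a := by
        rw [Multiset.count_filter, if_pos le_rfl]
      have h2 : ((MM n l).filter (b ≤ ·)).count a = 0 := by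
        rw [Multiset.count_filter, if_neg (by omega)]
      rw [heq, h2] at h1
      have : a ∈ MM n l := (mem_MM (by omega) hln a).2 ⟨by omega, han⟩
      rw [← Multiset.count_pos] at this
      omega
    intro k hk k' hk' heq
    rw [Finset.mem_coe, Finset.mem_Icc] at hk hk'
    dsimp only at heq
    rcases Nat.lt_trichotomy k k' with h | h | h
    · exact absurd heq (key k k' hk.1 hk.2 h)
    · exact h
    · exact absurd heq.symm (key k' k hk'.1 hk'.2 h)
  · rw [Finset.mem_image]
    rintro ⟨k, hk, heq⟩
    rw [Finset.mem_Icc] at hk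
    have h1 : (l ::ₘ (MM n l).filter (l < ·)).count l = 1 := by
      rw [Multiset.count_cons, if_pos rfl, Multiset.count_filter, if_neg (by omega)]
    have h2 : ((MM n l).filter (k ≤ ·)).count l = if k ≤ l then 2 else 0 := by
      rw [Multiset.count_filter]
      split
      · rw [count_MM_l (by omega) hln]
      · rfl
    rw [← heq, h2] at h1
    split at h1 <;> omega

noncomputable def goodF (n l : ℕ) : Finset (Multiset ℕ) :=
  allB n l \ insert 0 (badF n l)

lemma mem_goodF {n l : ℕ} (hl : 2 ≤ l) (hln : l ≤ n) {β : Multiset ℕ} :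
    β ∈ goodF n l ↔ β ≤ MM n l ∧ 1 ∉ β ∧ β ≠ 0 ∧ ¬ Bad n l β := by
  rw [goodF, Finset.mem_sdiff, mem_allB hl hln, Finset.mem_insert]
  constructor
  · rintro ⟨⟨hle, h1⟩, hnot⟩
    push_neg at hnot
    refine ⟨hle, h1, hnot.1, ?_⟩
    intro hbad
    exact hnot.2 ((bad_iff hl hln hle h1 hnot.1).1 hbad)
  · rintro ⟨hle, h1, h0, hnb⟩
    refine ⟨⟨hle, h1⟩, ?_⟩
    rintro (rfl | hmem)
    · exact h0 rfl
    · exact hnb ((bad_iff hl hln hle h1 h0).2 hmem)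

lemma card_goodF {n l : ℕ} (hn : 3 ≤ n) (hl : 2 ≤ l) (hln : l ≤ n) :
    (goodF n l).card = 3 * 2 ^ (n - 2) - (n + 1) := by
  rw [goodF, Finset.card_sdiff_of_subset, card_allB hn hl hln, Finset.card_insert_of_notMem,
    card_badF hn hl hln]
  · intro h
    exact badF_ne_zero hl hln 0 h rfl
  · intro β hβ
    rcases Finset.mem_insert.1 hβ with rfl | hmem
    · rw [mem_allB hl hln]
      simp
    · exact badF_subset_allB hl hln hmem



lemma sort_chain' (s : Multiset ℕ) : (s.sort (· ≤ ·)).Chain' (· ≤ ·) :=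
  chain'_iff_pairwise.2 (Multiset.pairwise_sort _ _)

lemma sort_ne_nil {s : Multiset ℕ} (h : s ≠ 0) : s.sort (· ≤ ·) ≠ [] := by
  intro hc
  apply h
  have := Multiset.sort_eq s (· ≤ ·)
  rw [hc] at this
  simpa using this.symm

lemma mem_sort_iff {s : Multiset ℕ} {x : ℕ} : x ∈ s.sort (· ≤ ·) ↔ x ∈ s := by
  rw [← Multiset.mem_coe, Multiset.sort_eq]

lemma notBad_iff {n l : ℕ} {β : Multiset ℕ} (h0 : β ≠ 0) (hA : MM n l - β ≠ 0) :
    ¬ Bad n l β ↔ (β.sort (· ≤ ·)).headD 0 < ((MM n l - β).sort (· ≤ ·)).getLastD 0 := by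
  unfold Bad
  push_neg
  constructor
  · rintro ⟨a, ha, b, hb, hba⟩
    calc (β.sort (· ≤ ·)).headD 0 ≤ b :=
        headD_min (sort_chain' β) b (mem_sort_iff.2 hb)
      _ < a := hba
      _ ≤ ((MM n l - β).sort (· ≤ ·)).getLastD 0 :=
        getLastD_max (sort_chain' _) a (mem_sort_iff.2 ha)
  · intro h
    refine ⟨((MM n l - β).sort (· ≤ ·)).getLastD 0,
      mem_sort_iff.1 (getLastD_mem (sort_ne_nil hA)),
      (β.sort (· ≤ ·)).headD 0, mem_sort_iff.1 (headD_mem (sort_ne_nil h0)), h⟩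

lemma one_mem_sub {n l : ℕ} (hl : 2 ≤ l) (hln : l ≤ n) {β : Multiset ℕ} (h1 : 1 ∉ β) :
    1 ∈ MM n l - β := by
  rw [← Multiset.count_pos, Multiset.count_sub, count_MM n l, if_neg (by omega),
    if_pos ⟨le_rfl, by omega⟩, Multiset.count_eq_zero.2 h1]
  omega

lemma MM_eq {n l : ℕ} : (↑(List.range' 1 n) : Multiset ℕ) + {l} = MM n l := by
  rw [add_comm, MM, Multiset.singleton_add]

lemma mem_flat_iff {n l : ℕ} (hn : 3 ≤ n) (hl : 2 ≤ l) (hln : l ≤ n) (w : List ℕ) :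
    w ∈ flatInsK {l} n 2 ↔
      ∃ β ∈ goodF n l, w = ((MM n l - β).sort (· ≤ ·)) ++ (β.sort (· ≤ ·)) := by
  constructor
  · rintro ⟨⟨hmul, -⟩, hflat, hruns⟩
    rw [MM_eq] at hmul
    obtain ⟨A, B, hAB⟩ := List.length_eq_two.1 hruns
    obtain ⟨hjoin, hprop, hbound⟩ := runs_spec w
    rw [hAB] at hjoin hprop hbound
    have hA := hprop A (by simp)
    have hB := hprop B (by simp)
    have hw : w = A ++ B := by simpa using hjoin.symm
    have hhd : B.headD 0 < A.getLastD 0 := by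
      rw [chain'_cons] at hbound
      simpa using hbound.1
    have hflat' : A.headD 0 ≤ B.headD 0 := by
      rw [IsFlattened, hAB] at hflat
      simp only [List.map_cons, List.map_nil, chain'_cons] at hflat
      exact hflat.1
    have hcoe : (↑A : Multiset ℕ) + ↑B = MM n l := by
      rw [Multiset.coe_add A B, ← hw, hmul]
    have hAmul : (↑A : Multiset ℕ) = MM n l - ↑B :=
      eq_tsub_of_add_eq hcoe
    have hBle : (↑B : Multiset ℕ) ≤ MM n l := by
      rw [← hcoe]
      exact Multiset.le_add_left _ _
    have h1B : (1 : ℕ) ∉ (↑B : Multiset ℕ) := by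
      intro h1
      have h1B' : 1 ∈ B := by simpa using h1
      have hBh : B.headD 0 = 1 := by
        have hge : ∀ x ∈ B, 1 ≤ x := by
          intro x hx
          have : x ∈ MM n l := Multiset.mem_of_le hBle (by simpa using hx)
          exact ((mem_MM (by omega) hln x).1 this).1
        have := headD_min hB.2 1 h1B'
        have := hge _ (headD_mem hB.1)
        omega
      have hAh : A.headD 0 = 1 := by
        have : 1 ≤ A.headD 0 := by
          have hmem : A.headD 0 ∈ MM n l := by
            rw [← hcoe]
            exact Multiset.mem_add.2 (Or.inl (by simpa using headD_mem hA.1))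
          exact ((mem_MM (by omega) hln _).1 hmem).1
        omega
      have h1A : (1 : ℕ) ∈ A := hAh ▸ headD_mem hA.1
      have hcount : 2 ≤ (MM n l).count 1 := by
        rw [← hcoe, Multiset.count_add]
        have c1 : 1 ≤ Multiset.count 1 (↑A : Multiset ℕ) :=
          Multiset.count_pos.2 (by simpa using h1A)
        have c2 : 1 ≤ Multiset.count 1 (↑B : Multiset ℕ) :=
          Multiset.count_pos.2 (by simpa using h1B')
        omega
      rw [count_MM n l, if_neg (by omega), if_pos ⟨le_rfl, by omega⟩] at hcount
      omega
    have hBne : (↑B : Multiset ℕ) ≠ 0 := by simpa using hB.1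
    have hAsort : A = (MM n l - ↑B).sort (· ≤ ·) := by
      apply List.Perm.eq_of_pairwise' (chain'_iff_pairwise.1 hA.2)
        (Multiset.pairwise_sort _ _)
      rw [← Multiset.coe_eq_coe, Multiset.sort_eq, hAmul]
    have hBsort : B = Multiset.sort (↑B : Multiset ℕ) (· ≤ ·) := by
      apply List.Perm.eq_of_pairwise' (chain'_iff_pairwise.1 hB.2)
        (Multiset.pairwise_sort _ _)
      rw [← Multiset.coe_eq_coe, Multiset.sort_eq]
    refine ⟨↑B, ?_, ?_⟩
    · rw [mem_goodF hl hln]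
      refine ⟨hBle, h1B, hBne, ?_⟩
      rw [notBad_iff hBne]
      · rw [← hBsort, ← hAsort]
        exact hhd
      · rw [← hAmul]
        simpa using hA.1
    · rw [hw, ← hAsort, ← hBsort]
  · rintro ⟨β, hβ, rfl⟩
    rw [mem_goodF hl hln] at hβ
    obtain ⟨hle, h1, h0, hnb⟩ := hβ
    have hAne : MM n l - β ≠ 0 := by
      intro h
      have := one_mem_sub hl hln (β := β) h1
      rw [h] at this
      simp at this
    set A := (MM n l - β).sort (· ≤ ·) with hA
    set B := β.sort (· ≤ ·) with hB
    have hAnil : A ≠ [] := sort_ne_nil hAne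
    have hBnil : B ≠ [] := sort_ne_nil h0
    have hhd : B.headD 0 < A.getLastD 0 := (notBad_iff h0 hAne).1 hnb
    have hruns : runs (A ++ B) = [A, B] :=
      runs_two hAnil hBnil (sort_chain' _) (sort_chain' _) hhd
    have hwcoe : (↑(A ++ B) : Multiset ℕ) = MM n l := by
      rw [← Multiset.coe_add A B, hA, hB, Multiset.sort_eq, Multiset.sort_eq,
        tsub_add_cancel_of_le hle]
    have hlw : l ∈ A ++ B := by
      rw [← Multiset.mem_coe, hwcoe, mem_MM (by omega) hln]
      omega
    refine ⟨⟨by rw [hwcoe, MM_eq], ?_⟩, ?_, ?_⟩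
    · refine ⟨(A ++ B).erase l, ?_, List.erase_sublist⟩
      have hperm := List.perm_cons_erase hlw
      have : (↑(A ++ B) : Multiset ℕ) = l ::ₘ ↑((A ++ B).erase l) := by
        rw [Multiset.cons_coe, Multiset.coe_eq_coe]
        exact hperm
      rw [hwcoe, MM] at this
      rw [← Multiset.coe_eq_coe]
      exact (Multiset.cons_inj_right l).1 this.symm
    · rw [IsFlattened, hruns]
      simp only [List.map_cons, List.map_nil, chain'_cons, chain'_singleton,
        and_true]
      have h1A : (1 : ℕ) ∈ A := by
        rw [hA, mem_sort_iff]
        exact one_mem_sub hl hln h1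
      have hA1 : A.headD 0 ≤ 1 := headD_min (sort_chain' _) 1 h1A
      have hB1 : 1 ≤ B.headD 0 := by
        have hmem : B.headD 0 ∈ MM n l :=
          Multiset.mem_of_le hle (by rw [← mem_sort_iff, ← hB]; exact headD_mem hBnil)
        exact ((mem_MM (by omega) hln _).1 hmem).1
      omega
    · rw [numRuns, hruns]
      rfl

lemma flat_eq {n l : ℕ} (hn : 3 ≤ n) (hl : 2 ≤ l) (hln : l ≤ n) :
    flatInsK {l} n 2 =
      ↑((goodF n l).image
        (fun β => ((MM n l - β).sort (· ≤ ·)) ++ (β.sort (· ≤ ·)))) := by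
  ext w
  rw [mem_flat_iff hn hl hln, Finset.coe_image, Set.mem_image]
  constructor
  · rintro ⟨β, hβ, rfl⟩
    exact ⟨β, by simpa using hβ, rfl⟩
  · rintro ⟨β, hβ, rfl⟩
    exact ⟨β, by simpa using hβ, rfl⟩

lemma two_pow_sum (k : ℕ) : ∑ i ∈ Finset.range k, 2 ^ i = 2 ^ k - 1 := by
  induction k with
  | zero => simp
  | succ k ih =>
    rw [Finset.sum_range_succ, ih, pow_succ]
    have : 1 ≤ 2 ^ k := Nat.one_le_two_pow
    omega

lemma sum_id (m : ℕ) :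
    ∑ i ∈ Finset.range (m + 1), 2 ^ i * (m + 2 - i) = 3 * 2 ^ (m + 1) - (m + 4) := by
  induction m with
  | zero => simp
  | succ m ih =>
    have hsplit : ∀ i ∈ Finset.range (m + 2), 2 ^ i * (m + 1 + 2 - i) =
        2 ^ i * (m + 2 - i) + 2 ^ i := by
      intro i hi
      rw [Finset.mem_range] at hi
      have : m + 1 + 2 - i = (m + 2 - i) + 1 := by omega
      rw [this, Nat.mul_add, mul_one]
    rw [Finset.sum_congr rfl hsplit, Finset.sum_add_distrib, two_pow_sum,
      Finset.sum_range_succ, ih]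
    have h4 : m + 2 - (m + 1) = 1 := by omega
    rw [h4]
    have h1 : m + 1 < 2 ^ (m + 1) := Nat.lt_two_pow_self
    have h3 : (2 : ℕ) ^ (m + 1 + 1) = 2 ^ (m + 1) * 2 := pow_succ 2 (m + 1)
    have h5 : (2 : ℕ) ^ (m + 2) = 2 ^ (m + 1) * 2 := pow_succ 2 (m + 1)
    have h6 : (2 : ℕ) ^ (m + 1) = 2 ^ m * 2 := pow_succ 2 m
    omega

end FlatPF

open FlatPF in
/-- For `n ≥ 3` and `2 ≤ l ≤ n`, the number of flattened `{l}`-insertion parking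
functions of order `n` with exactly two runs is `∑_{i=0}^{n-3} 2^i (n-1-i)`. -/
theorem stmt8 (n l : ℕ) (hn : 3 ≤ n) (hl : 2 ≤ l) (hln : l ≤ n) :
    fS {l} n 2 = ∑ i ∈ Finset.range (n - 2), 2 ^ i * (n - 1 - i) := by
  obtain ⟨m, rfl⟩ : ∃ m, n = m + 3 := ⟨n - 3, by omega⟩
  have hseq : ∑ i ∈ Finset.range (m + 3 - 2), 2 ^ i * (m + 3 - 1 - i) =
      3 * 2 ^ (m + 1) - (m + 4) := by
    have h1 : m + 3 - 2 = m + 1 := by omega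
    have h2 : ∀ i, m + 3 - 1 - i = m + 2 - i := by intro i; omega
    rw [h1]
    calc ∑ i ∈ Finset.range (m + 1), 2 ^ i * (m + 3 - 1 - i)
        = ∑ i ∈ Finset.range (m + 1), 2 ^ i * (m + 2 - i) := by
          exact Finset.sum_congr rfl (fun i _ => by rw [h2])
      _ = 3 * 2 ^ (m + 1) - (m + 4) := sum_id m
  rw [hseq, fS, flat_eq hn hl hln, Set.ncard_coe_finset,
    Finset.card_image_of_injOn, card_goodF hn hl hln]
  · congr 1
  · intro β hβ β' hβ' heq
    rw [Finset.mem_coe, mem_goodF hl hln] at hβ hβ'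
    have hAne : MM (m + 3) l - β ≠ 0 := by
      intro h
      have := one_mem_sub hl hln (β := β) hβ.2.1
      rw [h] at this
      simp at this
    have hAne' : MM (m + 3) l - β' ≠ 0 := by
      intro h
      have := one_mem_sub hl hln (β := β') hβ'.2.1
      rw [h] at this
      simp at this
    have hr : runs (((MM (m + 3) l - β).sort (· ≤ ·)) ++ (β.sort (· ≤ ·))) =
        [((MM (m + 3) l - β).sort (· ≤ ·)), (β.sort (· ≤ ·))] :=
      runs_two (sort_ne_nil hAne) (sort_ne_nil hβ.2.2.1) (sort_chain' _) (sort_chain' _)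
        ((notBad_iff hβ.2.2.1 hAne).1 hβ.2.2.2)
    have hr' : runs (((MM (m + 3) l - β').sort (· ≤ ·)) ++ (β'.sort (· ≤ ·))) =
        [((MM (m + 3) l - β').sort (· ≤ ·)), (β'.sort (· ≤ ·))] :=
      runs_two (sort_ne_nil hAne') (sort_ne_nil hβ'.2.2.1) (sort_chain' _) (sort_chain' _)
        ((notBad_iff hβ'.2.2.1 hAne').1 hβ'.2.2.2)
    have := hr.symm.trans ((congrArg runs heq).trans hr')
    have hsort : β.sort (· ≤ ·) = β'.sort (· ≤ ·) := by
      simp only [List.cons.injEq, and_true] at this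
      exact this.2
    calc β = ↑(β.sort (· ≤ ·)) := (Multiset.sort_eq _ _).symm
      _ = ↑(β'.sort (· ≤ ·)) := by rw [hsort]
      _ = β' := Multiset.sort_eq _ _
end
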